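/- For i = 1, …, M let X_i be n₁×n₁ real matrices and Y_i be n₂×n₂ real matrices, and define F_I(X₁, …, X_M, Y₁, …, Y_M) = inf over unit vectors v ∈ ℝ^M of ( ‖Σ_{i=1}^M v_i X_i‖_* − ‖Σ_{i=1}^M v_i Y_i‖_* ). Then F_I is Lipschitz with constant at most √(n₁ + n₂) with respect to the Euclidean norm on the concatenated tuple (X₁, …, X_M, Y₁, …, Y_M), i.e., the norm given by the square root of the sum of the squared Frobenius norms of the coordinate differences. -/

import Mathlib

open Matrix

/-- The nuclear norm of a real matrix: the sum of its singular values,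
i.e. the sum of the square roots of the eigenvalues of `Xᵀ * X`. -/
noncomputable def nuclearNorm {m n : Type*} [Fintype m] [Fintype n] [DecidableEq n]
    (X : Matrix m n ℝ) : ℝ :=
  ∑ i, Real.sqrt ((show (Xᵀ * X).IsHermitian by
    ext i j; simp [Matrix.mul_apply, mul_comm]).eigenvalues i)

theorem Matrix.isHermitian_transpose_mul_self {m n : Type*} [Fintype m]
    (X : Matrix m n ℝ) : (Xᵀ * X).IsHermitian := by
  ext i j; simp [Matrix.mul_apply, mul_comm]

/-- `F_I(X₁,…,X_M,Y₁,…,Y_M) = inf_{‖v‖=1} ‖Σ v_i X_i‖_* − ‖Σ v_i Y_i‖_*`. -/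
noncomputable def FI {M n₁ n₂ : ℕ} (X : Fin M → Matrix (Fin n₁) (Fin n₁) ℝ)
    (Y : Fin M → Matrix (Fin n₂) (Fin n₂) ℝ) : ℝ :=
  ⨅ v : {v : Fin M → ℝ // Real.sqrt (∑ i, v i ^ 2) = 1},
    nuclearNorm (∑ i, v.1 i • X i) - nuclearNorm (∑ i, v.1 i • Y i)

namespace Stmt9Aux
noncomputable def fsq {k : ℕ} (A : Matrix (Fin k) (Fin k) ℝ) : ℝ := ∑ a, ∑ b, A a b ^ 2

lemma fsq_nonneg {k : ℕ} (A : Matrix (Fin k) (Fin k) ℝ) : 0 ≤ fsq A :=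
  Finset.sum_nonneg fun a _ => Finset.sum_nonneg fun b _ => sq_nonneg _

lemma fsq_sub_comm {k : ℕ} (A B : Matrix (Fin k) (Fin k) ℝ) : fsq (A - B) = fsq (B - A) := by
  unfold fsq
  refine Finset.sum_congr rfl fun a _ => Finset.sum_congr rfl fun b _ => ?_
  simp only [Matrix.sub_apply]; ring

lemma dot_nonneg {k : ℕ} (x : Fin k → ℝ) : 0 ≤ x ⬝ᵥ x :=
  Finset.sum_nonneg fun _ _ => mul_self_nonneg _

lemma dot_le {k : ℕ} (x y : Fin k → ℝ) :
    x ⬝ᵥ y ≤ Real.sqrt (x ⬝ᵥ x) * Real.sqrt (y ⬝ᵥ y) := by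
  have h := Real.sum_mul_le_sqrt_mul_sqrt Finset.univ x y
  have e : ∀ z : Fin k → ℝ, ∑ i, z i ^ 2 = z ⬝ᵥ z := fun z => by simp [dotProduct, sq]
  rw [e, e] at h
  exact h

lemma dot_mulVec_left {k l : ℕ} (M : Matrix (Fin k) (Fin l) ℝ) (c : Fin l → ℝ) (x : Fin k → ℝ) :
    (M *ᵥ c) ⬝ᵥ x = c ⬝ᵥ (Mᵀ *ᵥ x) := by
  simp only [dotProduct, mulVec, transpose_apply, Finset.sum_mul, Finset.mul_sum]
  rw [Finset.sum_comm]
  exact Finset.sum_congr rfl fun j _ => Finset.sum_congr rfl fun i _ => by ring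

lemma conj_diag {k : ℕ} (V N : Matrix (Fin k) (Fin k) ℝ) (i : Fin k) :
    (Vᵀ * N * V) i i = (fun a => V a i) ⬝ᵥ (N *ᵥ fun a => V a i) := by
  simp only [Matrix.mul_apply, transpose_apply, dotProduct, mulVec, Finset.sum_mul,
    Finset.mul_sum]
  rw [Finset.sum_comm]
  exact Finset.sum_congr rfl fun a _ => Finset.sum_congr rfl fun l _ => by ring

variable {k : ℕ}

lemma star_eq_transpose (V : Matrix (Fin k) (Fin k) ℝ) : star V = Vᵀ := by
  ext i j; simp [Matrix.star_apply]

lemma nn_nonneg (A : Matrix (Fin k) (Fin k) ℝ) : 0 ≤ nuclearNorm A :=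
  Finset.sum_nonneg fun _ _ => Real.sqrt_nonneg _

lemma spec_facts (A : Matrix (Fin k) (Fin k) ℝ) :
    ∃ V : Matrix (Fin k) (Fin k) ℝ,
      Vᵀ * V = 1 ∧ V * Vᵀ = 1 ∧
      Vᵀ * (Aᴴ * A) * V =
        diagonal ((Matrix.isHermitian_transpose_mul_self A).eigenvalues) := by
  set hA := Matrix.isHermitian_transpose_mul_self A
  refine ⟨(hA.eigenvectorUnitary : Matrix (Fin k) (Fin k) ℝ), ?_, ?_, ?_⟩
  · rw [← star_eq_transpose]
    exact (Matrix.mem_unitaryGroup_iff').mp hA.eigenvectorUnitary.2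
  · rw [← star_eq_transpose (hA.eigenvectorUnitary : Matrix (Fin k) (Fin k) ℝ)]
    exact (Matrix.mem_unitaryGroup_iff).mp hA.eigenvectorUnitary.2
  · rw [← star_eq_transpose]
    have h := Matrix.IsHermitian.conjStarAlgAut_star_eigenvectorUnitary hA
    simp only [Unitary.conjStarAlgAut_apply, Unitary.coe_star, star_star] at h
    rw [RCLike.ofReal_real_eq_id, Function.id_comp] at h
    exact h

lemma trace_diag (f : Fin k → ℝ) : trace (diagonal f) = ∑ i, f i := by
  simp [Matrix.trace, Matrix.diag]

lemma trace_le (W C : Matrix (Fin k) (Fin k) ℝ) :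
    trace (W * C) ≤ Real.sqrt (fsq W) * Real.sqrt (fsq C) := by
  have h := Real.sum_mul_le_sqrt_mul_sqrt (Finset.univ : Finset (Fin k × Fin k))
      (fun p => W p.1 p.2) (fun p => C p.2 p.1)
  have e1 : ∑ p : Fin k × Fin k, W p.1 p.2 * C p.2 p.1 = trace (W * C) := by
    rw [Fintype.sum_prod_type]
    simp [Matrix.trace, Matrix.diag, Matrix.mul_apply]
  have e2 : ∑ p : Fin k × Fin k, W p.1 p.2 ^ 2 = fsq W := by
    rw [Fintype.sum_prod_type]; rfl
  have e3 : ∑ p : Fin k × Fin k, C p.2 p.1 ^ 2 = fsq C := by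
    rw [Fintype.sum_prod_type]; exact Finset.sum_comm
  rw [e1, e2, e3] at h
  exact h

lemma trace_AtA (A : Matrix (Fin k) (Fin k) ℝ) : trace (Aᴴ * A) = fsq A := by
  have h : trace (Aᴴ * A) = ∑ j, ∑ i, A i j ^ 2 := by
    simp [Matrix.trace, Matrix.diag, Matrix.mul_apply, conjTranspose_apply, sq]
  rw [h]
  exact Finset.sum_comm

lemma sum_eig (A : Matrix (Fin k) (Fin k) ℝ) :
    ∑ i, (Matrix.isHermitian_transpose_mul_self A).eigenvalues i = fsq A := by
  obtain ⟨V, h1, h2, hspec⟩ := spec_facts A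
  have h : trace (diagonal ((Matrix.isHermitian_transpose_mul_self A).eigenvalues))
      = trace (Aᴴ * A) := by
    rw [← hspec, trace_mul_cycle, h2, one_mul]
  rw [trace_diag] at h
  rw [h, trace_AtA]

lemma nn_le_frob (A : Matrix (Fin k) (Fin k) ℝ) :
    nuclearNorm A ≤ Real.sqrt k * Real.sqrt (fsq A) := by
  set lam := (Matrix.isHermitian_transpose_mul_self A).eigenvalues with hlam
  have hnn : ∀ i, 0 ≤ lam i := fun i =>
    Matrix.eigenvalues_conjTranspose_mul_self_nonneg A i
  have h := Real.sum_mul_le_sqrt_mul_sqrt Finset.univ (fun _ : Fin k => (1:ℝ))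
      (fun i => Real.sqrt (lam i))
  simp only [one_mul, one_pow] at h
  have e1 : ∑ _i : Fin k, (1:ℝ) = (k : ℝ) := by simp
  have e2 : ∑ i, Real.sqrt (lam i) ^ 2 = fsq A := by
    rw [← sum_eig A]
    exact Finset.sum_congr rfl fun i _ => Real.sq_sqrt (hnn i)
  rw [e1, e2] at h
  exact h


lemma dual_le (W B : Matrix (Fin k) (Fin k) ℝ)
    (hW : ∀ x : Fin k → ℝ, (W *ᵥ x) ⬝ᵥ (W *ᵥ x) ≤ x ⬝ᵥ x) :
    trace (W * B) ≤ nuclearNorm B := by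
  obtain ⟨V, h1, h2, hspec⟩ := spec_facts B
  set lam := (Matrix.isHermitian_transpose_mul_self B).eigenvalues with hlam
  have hBt : Bᴴ = Bᵀ := by ext i j; simp [conjTranspose_apply]
  have htr : trace (Vᵀ * (W * B) * V) = trace (W * B) := by
    rw [trace_mul_cycle, h2, one_mul]
  have hterm : ∀ i, (Vᵀ * (W * B) * V) i i ≤ Real.sqrt (lam i) := by
    intro i
    set v : Fin k → ℝ := fun a => V a i with hv
    have hvv : v ⬝ᵥ v = 1 := by
      have e : (Vᵀ * V) i i = v ⬝ᵥ v := by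
        simp [Matrix.mul_apply, dotProduct, transpose_apply, hv]
      rw [← e, h1, Matrix.one_apply_eq]
    have hBv : (B *ᵥ v) ⬝ᵥ (B *ᵥ v) = lam i := by
      have e1 : (B *ᵥ v) ⬝ᵥ (B *ᵥ v) = v ⬝ᵥ ((Bᵀ * B) *ᵥ v) := by
        rw [dot_mulVec_left, mulVec_mulVec]
      rw [e1, ← hBt, ← conj_diag, hspec, diagonal_apply_eq]
    calc (Vᵀ * (W * B) * V) i i = v ⬝ᵥ ((W * B) *ᵥ v) := conj_diag ..
      _ = v ⬝ᵥ (W *ᵥ (B *ᵥ v)) := by rw [← mulVec_mulVec]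
      _ ≤ Real.sqrt (v ⬝ᵥ v) * Real.sqrt ((W *ᵥ (B *ᵥ v)) ⬝ᵥ (W *ᵥ (B *ᵥ v))) := dot_le ..
      _ ≤ 1 * Real.sqrt ((B *ᵥ v) ⬝ᵥ (B *ᵥ v)) := by
          rw [hvv, Real.sqrt_one]
          exact mul_le_mul_of_nonneg_left (Real.sqrt_le_sqrt (hW _)) zero_le_one
      _ = Real.sqrt (lam i) := by rw [one_mul, hBv]
  calc trace (W * B) = trace (Vᵀ * (W * B) * V) := htr.symm
    _ = ∑ i, (Vᵀ * (W * B) * V) i i := by simp [Matrix.trace, Matrix.diag]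
    _ ≤ ∑ i, Real.sqrt (lam i) := Finset.sum_le_sum fun i _ => hterm i
    _ = nuclearNorm B := rfl

lemma exists_dual (A : Matrix (Fin k) (Fin k) ℝ) :
    ∃ W : Matrix (Fin k) (Fin k) ℝ,
      (∀ x : Fin k → ℝ, (W *ᵥ x) ⬝ᵥ (W *ᵥ x) ≤ x ⬝ᵥ x) ∧
      trace (W * A) = nuclearNorm A ∧ fsq W ≤ (k : ℝ) := by
  obtain ⟨V, h1, h2, hspec⟩ := spec_facts A
  set lam := (Matrix.isHermitian_transpose_mul_self A).eigenvalues with hlam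
  have hnn : ∀ i, 0 ≤ lam i := fun i =>
    Matrix.eigenvalues_conjTranspose_mul_self_nonneg A i
  set g : Fin k → ℝ := fun i => if 0 < lam i then (Real.sqrt (lam i))⁻¹ else 0 with hg
  have hAt : Aᵀ = Aᴴ := by ext i j; simp [conjTranspose_apply]
  set W : Matrix (Fin k) (Fin k) ℝ := V * diagonal g * Vᵀ * Aᵀ with hW
  have hop : ∀ x : Fin k → ℝ, (W *ᵥ x) ⬝ᵥ (W *ᵥ x) ≤ x ⬝ᵥ x := by
    intro x
    set y : Fin k → ℝ := Vᵀ *ᵥ (Aᵀ *ᵥ x) with hy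
    have hWx : W *ᵥ x = V *ᵥ (diagonal g *ᵥ y) := by
      rw [hy]; simp only [mulVec_mulVec, hW, mul_assoc]
    have hVz : ∀ z : Fin k → ℝ, (V *ᵥ z) ⬝ᵥ (V *ᵥ z) = z ⬝ᵥ z := by
      intro z
      rw [dot_mulVec_left, mulVec_mulVec, h1, one_mulVec]
    have hzz : (W *ᵥ x) ⬝ᵥ (W *ᵥ x) = ∑ i, g i ^ 2 * y i ^ 2 := by
      rw [hWx, hVz]
      have e : ∀ i, (diagonal g *ᵥ y) i = g i * y i := fun i => mulVec_diagonal g y i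
      simp only [dotProduct, e]
      exact Finset.sum_congr rfl fun i _ => by ring
    set M : Matrix (Fin k) (Fin k) ℝ := A * V with hM
    have hMt : Mᵀ *ᵥ x = y := by
      rw [hM, hy, transpose_mul, ← mulVec_mulVec]
    have hMtM : Mᵀ * M = diagonal lam := by
      rw [← hspec, hM, transpose_mul, hAt]
      simp only [mul_assoc]
    set c : Fin k → ℝ := fun i => g i ^ 2 * y i with hc
    have key : 0 ≤ x ⬝ᵥ x - ∑ i, g i ^ 2 * y i ^ 2 := by
      have hr := dot_nonneg (x - M *ᵥ c)
      have e1 : (M *ᵥ c) ⬝ᵥ x = ∑ i, g i ^ 2 * y i ^ 2 := by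
        rw [dot_mulVec_left, hMt]
        simp only [dotProduct, hc]
        exact Finset.sum_congr rfl fun i _ => by ring
      have e2 : (M *ᵥ c) ⬝ᵥ (M *ᵥ c) = ∑ i, g i ^ 2 * y i ^ 2 := by
        rw [dot_mulVec_left, mulVec_mulVec, hMtM]
        have e : ∀ i, (diagonal lam *ᵥ c) i = lam i * c i := fun i => mulVec_diagonal lam c i
        simp only [dotProduct, e]
        simp only [hc]
        refine Finset.sum_congr rfl fun i _ => ?_
        rcases lt_or_eq_of_le (hnn i) with hpos | hzero
        · have hs0 : Real.sqrt (lam i) ≠ 0 := Real.sqrt_ne_zero'.mpr hpos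
          simp only [hg, if_pos hpos]
          set s := Real.sqrt (lam i) with hsdef
          have hs : s * s = lam i := Real.mul_self_sqrt (hnn i)
          rw [← hs]
          field_simp
        · simp [hg, ← hzero]
      have hexp : (x - M *ᵥ c) ⬝ᵥ (x - M *ᵥ c)
          = x ⬝ᵥ x - 2 * ((M *ᵥ c) ⬝ᵥ x) + (M *ᵥ c) ⬝ᵥ (M *ᵥ c) := by
        rw [sub_dotProduct, dotProduct_sub, dotProduct_sub, dotProduct_comm x (M *ᵥ c)]
        ring
      rw [hexp, e1, e2] at hr
      linarith
    rw [hzz]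
    linarith [key]
  have htr : trace (W * A) = nuclearNorm A := by
    have h3 : W * A = V * diagonal g * (Vᵀ * (Aᴴ * A)) := by
      rw [hW, hAt]; simp only [mul_assoc]
    rw [h3, trace_mul_comm, ← mul_assoc, hspec, diagonal_mul_diagonal, trace_diag]
    show ∑ i, lam i * g i = nuclearNorm A
    unfold nuclearNorm
    refine Finset.sum_congr rfl fun i _ => ?_
    rcases lt_or_eq_of_le (hnn i) with hpos | hzero
    · have hs0 : Real.sqrt (lam i) ≠ 0 := Real.sqrt_ne_zero'.mpr hpos
      simp only [hg, if_pos hpos]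
      set s := Real.sqrt (lam i) with hsdef
      have hs : s * s = lam i := Real.mul_self_sqrt (hnn i)
      rw [← hs]
      field_simp
    · simp [hg, ← hlam, ← hzero]
  have hfsq : fsq W ≤ (k : ℝ) := by
    have hcol : ∀ b, ∑ a, W a b ^ 2 ≤ 1 := by
      intro b
      have h := hop (Pi.single b 1)
      have e1 : W *ᵥ Pi.single b 1 = fun a => W a b := by
        ext a; simp [mulVec, dotProduct, Pi.single_apply]
      have e2 : (Pi.single b 1 : Fin k → ℝ) ⬝ᵥ Pi.single b 1 = 1 := by
        simp [dotProduct, Pi.single_apply]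
      rw [e1, e2] at h
      calc ∑ a, W a b ^ 2 = (fun a => W a b) ⬝ᵥ (fun a => W a b) := by
            simp [dotProduct, sq]
        _ ≤ 1 := h
    calc fsq W = ∑ b, ∑ a, W a b ^ 2 := Finset.sum_comm
      _ ≤ ∑ _b : Fin k, (1:ℝ) := Finset.sum_le_sum fun b _ => hcol b
      _ = (k : ℝ) := by simp
  exact ⟨W, hop, htr, hfsq⟩

lemma nn_lip (A B : Matrix (Fin k) (Fin k) ℝ) :
    nuclearNorm A ≤ nuclearNorm B + Real.sqrt k * Real.sqrt (fsq (A - B)) := by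
  obtain ⟨W, hop, htr, hfsq⟩ := exists_dual A
  have h1 : trace (W * B) ≤ nuclearNorm B := dual_le W B hop
  have h2 : trace (W * (A - B)) ≤ Real.sqrt (fsq W) * Real.sqrt (fsq (A - B)) :=
    trace_le W (A - B)
  have h3 : Real.sqrt (fsq W) * Real.sqrt (fsq (A - B))
      ≤ Real.sqrt k * Real.sqrt (fsq (A - B)) :=
    mul_le_mul_of_nonneg_right (Real.sqrt_le_sqrt hfsq) (Real.sqrt_nonneg _)
  have h4 : trace (W * A) = trace (W * B) + trace (W * (A - B)) := by
    rw [mul_sub, trace_sub]; ring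
  rw [← htr, h4]
  linarith


lemma sqrt_cs (a b c d : ℝ) (ha : 0 ≤ a) (hb : 0 ≤ b) (hc : 0 ≤ c) (hd : 0 ≤ d) :
    Real.sqrt a * Real.sqrt b + Real.sqrt c * Real.sqrt d
      ≤ Real.sqrt (a + c) * Real.sqrt (b + d) := by
  rw [← Real.sqrt_mul ha, ← Real.sqrt_mul hc, ← Real.sqrt_mul (by linarith : (0:ℝ) ≤ a + c)]
  have e3 : Real.sqrt (a*b) * Real.sqrt (c*d) = Real.sqrt (a*d) * Real.sqrt (c*b) := by
    rw [← Real.sqrt_mul (mul_nonneg ha hb), ← Real.sqrt_mul (mul_nonneg ha hd),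
      show a*b*(c*d) = a*d*(c*b) from by ring]
  have h4 : 2 * (Real.sqrt (a*d) * Real.sqrt (c*b)) ≤ a*d + c*b := by
    nlinarith [sq_nonneg (Real.sqrt (a*d) - Real.sqrt (c*b)),
      Real.sq_sqrt (mul_nonneg ha hd), Real.sq_sqrt (mul_nonneg hc hb)]
  have key : (Real.sqrt (a*b) + Real.sqrt (c*d))^2 ≤ (a+c)*(b+d) := by
    have e1 := Real.sq_sqrt (mul_nonneg ha hb)
    have e2 := Real.sq_sqrt (mul_nonneg hc hd)
    nlinarith [e3, h4]
  calc Real.sqrt (a*b) + Real.sqrt (c*d)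
      = Real.sqrt ((Real.sqrt (a*b) + Real.sqrt (c*d))^2) :=
        (Real.sqrt_sq (by positivity)).symm
    _ ≤ Real.sqrt ((a+c)*(b+d)) := Real.sqrt_le_sqrt key

lemma frob_sum_le {m : ℕ} (v : Fin m → ℝ) (hv : ∑ i, v i ^ 2 = 1)
    (C : Fin m → Matrix (Fin k) (Fin k) ℝ) :
    fsq (∑ i, v i • C i) ≤ ∑ i, fsq (C i) := by
  unfold fsq
  have hab : ∀ a b : Fin k, ((∑ i, v i • C i) a b) ^ 2 ≤ ∑ i, C i a b ^ 2 := by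
    intro a b
    have e : (∑ i, v i • C i) a b = ∑ i, v i * C i a b := by
      rw [Matrix.sum_apply]
      exact Finset.sum_congr rfl fun i _ => rfl
    rw [e]
    have h := Finset.sum_mul_sq_le_sq_mul_sq Finset.univ v (fun i => C i a b)
    rw [hv, one_mul] at h
    exact h
  calc ∑ a, ∑ b, ((∑ i, v i • C i) a b) ^ 2 ≤ ∑ a, ∑ b, ∑ i, C i a b ^ 2 :=
      Finset.sum_le_sum fun a _ => Finset.sum_le_sum fun b _ => hab a b
    _ = ∑ a, ∑ i, ∑ b, C i a b ^ 2 := Finset.sum_congr rfl fun a _ => Finset.sum_comm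
    _ = ∑ i, ∑ a, ∑ b, C i a b ^ 2 := Finset.sum_comm

lemma unit_of_sqrt {m : ℕ} {v : Fin m → ℝ} (hv : Real.sqrt (∑ i, v i ^ 2) = 1) :
    ∑ i, v i ^ 2 = 1 := Real.sqrt_eq_one.mp hv

lemma FI_le {M n₁ n₂ : ℕ} (X X' : Fin M → Matrix (Fin n₁) (Fin n₁) ℝ)
    (Y Y' : Fin M → Matrix (Fin n₂) (Fin n₂) ℝ) :
    FI X Y ≤ FI X' Y' + Real.sqrt (n₁ + n₂) *
      Real.sqrt ((∑ i, fsq (X i - X' i)) + ∑ i, fsq (Y i - Y' i)) := by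
  set sX := ∑ i, fsq (X i - X' i) with hsX
  set sY := ∑ i, fsq (Y i - Y' i) with hsY
  have hsX0 : 0 ≤ sX := Finset.sum_nonneg fun i _ => fsq_nonneg _
  have hsY0 : 0 ≤ sY := Finset.sum_nonneg fun i _ => fsq_nonneg _
  have hFI : ∀ (A : Fin M → Matrix (Fin n₁) (Fin n₁) ℝ)
      (B : Fin M → Matrix (Fin n₂) (Fin n₂) ℝ),
      FI A B = ⨅ v : {v : Fin M → ℝ // Real.sqrt (∑ i, v i ^ 2) = 1},
        nuclearNorm (∑ i, v.1 i • A i) - nuclearNorm (∑ i, v.1 i • B i) := fun _ _ => rfl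
  by_cases hne : Nonempty {v : Fin M → ℝ // Real.sqrt (∑ i, v i ^ 2) = 1}
  · haveI := hne
    have hbdd : BddBelow (Set.range fun v : {v : Fin M → ℝ // Real.sqrt (∑ i, v i ^ 2) = 1} =>
        nuclearNorm (∑ i, v.1 i • X i) - nuclearNorm (∑ i, v.1 i • Y i)) := by
      refine ⟨-(Real.sqrt n₂ * Real.sqrt (∑ i, fsq (Y i))), ?_⟩
      rintro r ⟨v, rfl⟩
      have h1 : nuclearNorm (∑ i, v.1 i • Y i)
          ≤ Real.sqrt n₂ * Real.sqrt (fsq (∑ i, v.1 i • Y i)) := nn_le_frob _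
      have h2 : fsq (∑ i, v.1 i • Y i) ≤ ∑ i, fsq (Y i) :=
        frob_sum_le v.1 (unit_of_sqrt v.2) Y
      have h3 := nn_nonneg (∑ i, v.1 i • X i)
      have h5 : Real.sqrt n₂ * Real.sqrt (fsq (∑ i, v.1 i • Y i))
          ≤ Real.sqrt n₂ * Real.sqrt (∑ i, fsq (Y i)) :=
        mul_le_mul_of_nonneg_left (Real.sqrt_le_sqrt h2) (Real.sqrt_nonneg _)
      show -(Real.sqrt n₂ * Real.sqrt (∑ i, fsq (Y i)))
        ≤ nuclearNorm (∑ i, v.1 i • X i) - nuclearNorm (∑ i, v.1 i • Y i)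
      linarith
    have hstep : ∀ v : {v : Fin M → ℝ // Real.sqrt (∑ i, v i ^ 2) = 1},
        FI X Y ≤ (nuclearNorm (∑ i, v.1 i • X' i) - nuclearNorm (∑ i, v.1 i • Y' i))
          + Real.sqrt (n₁ + n₂) * Real.sqrt (sX + sY) := by
      intro v
      have hvu := unit_of_sqrt v.2
      have hXle : nuclearNorm (∑ i, v.1 i • X i) ≤ nuclearNorm (∑ i, v.1 i • X' i)
          + Real.sqrt n₁ * Real.sqrt sX := by
        have h := nn_lip (∑ i, v.1 i • X i) (∑ i, v.1 i • X' i)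
        have e : (∑ i, v.1 i • X i) - (∑ i, v.1 i • X' i) = ∑ i, v.1 i • (X i - X' i) := by
          rw [← Finset.sum_sub_distrib]
          exact Finset.sum_congr rfl fun i _ => (smul_sub _ _ _).symm
        rw [e] at h
        have h2 : fsq (∑ i, v.1 i • (X i - X' i)) ≤ sX := frob_sum_le v.1 hvu _
        have h3 : Real.sqrt n₁ * Real.sqrt (fsq (∑ i, v.1 i • (X i - X' i)))
            ≤ Real.sqrt n₁ * Real.sqrt sX :=
          mul_le_mul_of_nonneg_left (Real.sqrt_le_sqrt h2) (Real.sqrt_nonneg _)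
        linarith
      have hYle : nuclearNorm (∑ i, v.1 i • Y' i) ≤ nuclearNorm (∑ i, v.1 i • Y i)
          + Real.sqrt n₂ * Real.sqrt sY := by
        have h := nn_lip (∑ i, v.1 i • Y' i) (∑ i, v.1 i • Y i)
        have e : (∑ i, v.1 i • Y' i) - (∑ i, v.1 i • Y i) = ∑ i, v.1 i • (Y' i - Y i) := by
          rw [← Finset.sum_sub_distrib]
          exact Finset.sum_congr rfl fun i _ => (smul_sub _ _ _).symm
        rw [e] at h
        have h2 : fsq (∑ i, v.1 i • (Y' i - Y i)) ≤ sY := by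
          calc fsq (∑ i, v.1 i • (Y' i - Y i)) ≤ ∑ i, fsq (Y' i - Y i) :=
              frob_sum_le v.1 hvu _
            _ = sY := by
              rw [hsY]
              exact Finset.sum_congr rfl fun i _ => fsq_sub_comm _ _
        have h3 : Real.sqrt n₂ * Real.sqrt (fsq (∑ i, v.1 i • (Y' i - Y i)))
            ≤ Real.sqrt n₂ * Real.sqrt sY :=
          mul_le_mul_of_nonneg_left (Real.sqrt_le_sqrt h2) (Real.sqrt_nonneg _)
        linarith
      have hcs : Real.sqrt n₁ * Real.sqrt sX + Real.sqrt n₂ * Real.sqrt sY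
          ≤ Real.sqrt (n₁ + n₂) * Real.sqrt (sX + sY) :=
        sqrt_cs n₁ sX n₂ sY (Nat.cast_nonneg _) hsX0 (Nat.cast_nonneg _) hsY0
      have hinf_le : FI X Y ≤ nuclearNorm (∑ i, v.1 i • X i)
          - nuclearNorm (∑ i, v.1 i • Y i) := by
        rw [hFI]
        exact ciInf_le hbdd v
      linarith
    have hfin : FI X Y - Real.sqrt (n₁ + n₂) * Real.sqrt (sX + sY) ≤ FI X' Y' := by
      rw [hFI X' Y']
      exact le_ciInf fun v => by linarith [hstep v]
    linarith
  · haveI : IsEmpty {v : Fin M → ℝ // Real.sqrt (∑ i, v i ^ 2) = 1} :=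
      not_nonempty_iff.mp hne
    have h0 : FI X Y = 0 := by rw [hFI]; exact Real.iInf_of_isEmpty _
    have h0' : FI X' Y' = 0 := by rw [hFI]; exact Real.iInf_of_isEmpty _
    rw [h0, h0', zero_add]
    positivity

end Stmt9Aux

/-- `F_I` is Lipschitz with constant at most `√(n₁ + n₂)` for the Euclidean norm
given by the square root of the sum of squared Frobenius norms of the
coordinate differences. -/
theorem stmt9 (M n₁ n₂ : ℕ)
    (X X' : Fin M → Matrix (Fin n₁) (Fin n₁) ℝ)
    (Y Y' : Fin M → Matrix (Fin n₂) (Fin n₂) ℝ) :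
    |FI X Y - FI X' Y'| ≤ Real.sqrt (n₁ + n₂) *
      Real.sqrt ((∑ i, ∑ a, ∑ b, (X i a b - X' i a b) ^ 2) +
        (∑ i, ∑ a, ∑ b, (Y i a b - Y' i a b) ^ 2)) := by
  have e1 : ∀ (m : ℕ) (A B : Fin M → Matrix (Fin m) (Fin m) ℝ),
      ∑ i, Stmt9Aux.fsq (A i - B i) = ∑ i, ∑ a, ∑ b, (A i a b - B i a b) ^ 2 := by
    intro m A B
    refine Finset.sum_congr rfl fun i _ => ?_
    unfold Stmt9Aux.fsq
    exact Finset.sum_congr rfl fun a _ => Finset.sum_congr rfl fun b _ => by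
      rw [Matrix.sub_apply]
  rw [abs_sub_le_iff]
  constructor
  · have h := Stmt9Aux.FI_le X X' Y Y'
    rw [e1 n₁ X X', e1 n₂ Y Y'] at h
    linarith
  · have h := Stmt9Aux.FI_le X' X Y' Y
    rw [e1 n₁ X' X, e1 n₂ Y' Y] at h
    have e2 : (∑ i, ∑ a, ∑ b, (X' i a b - X i a b) ^ 2)
        = ∑ i, ∑ a, ∑ b, (X i a b - X' i a b) ^ 2 :=
      Finset.sum_congr rfl fun i _ => Finset.sum_congr rfl fun a _ =>
        Finset.sum_congr rfl fun b _ => by ring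
    have e3 : (∑ i, ∑ a, ∑ b, (Y' i a b - Y i a b) ^ 2)
        = ∑ i, ∑ a, ∑ b, (Y i a b - Y' i a b) ^ 2 :=
      Finset.sum_congr rfl fun i _ => Finset.sum_congr rfl fun a _ =>
        Finset.sum_congr rfl fun b _ => by ring
    rw [e2, e3] at h
    linarith
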